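/- arXiv:2411.05308 — 3 statements merged into one kernel-verified Lean document; each statement's English description precedes it below -/
import Mathlib

section
/- Let L > 0, λ ∈ ℝ and ε > 0. Let u : ℝ → ℝ → ℂ (time, space) be twice continuously differentiable jointly in (t,x), L-periodic in space (u t (x+L) = u t x for all t, x), and satisfy the regularized logarithmic Schrödinger equation i ∂ₜu(t,x) + ∂ₓₓu(t,x) = λ · u(t,x) · ln((ε + |u(t,x)|)²) for all t, x. Then the regularized energy E(t) = ∫_{0}^{L} ( |∂ₓu(t,x)|² + 2ελ|u(t,x)| + 2λ(|u(t,x)|² − ε²) ln(ε + |u(t,x)|) ) dx is independent of t, i.e. E(t₁) = E(t₂) for all t₁, t₂ ∈ ℝ. -/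
open Complex MeasureTheory Metric

private lemma hasDerivAt_creal {γ : ℝ → ℂ} {γ' : ℂ} {t : ℝ} (h : HasDerivAt γ γ' t) :
    HasDerivAt (fun s => (γ s).re) γ'.re t := by
  exact Complex.reCLM.hasFDerivAt.comp_hasDerivAt t h

private lemma hasDerivAt_cimag {γ : ℝ → ℂ} {γ' : ℂ} {t : ℝ} (h : HasDerivAt γ γ' t) :
    HasDerivAt (fun s => (γ s).im) γ'.im t := by
  exact Complex.imCLM.hasFDerivAt.comp_hasDerivAt t h

private lemma hasDerivAt_abs_sq {γ : ℝ → ℂ} {γ' : ℂ} {t : ℝ} (h : HasDerivAt γ γ' t) :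
    HasDerivAt (fun s => norm (γ s) ^ 2) (2 * ((starRingEnd ℂ) (γ t) * γ').re) t := by
  have h2 := ((hasDerivAt_creal h).mul (hasDerivAt_creal h)).add
    ((hasDerivAt_cimag h).mul (hasDerivAt_cimag h))
  have hfun : (fun s => (γ s).re * (γ s).re + (γ s).im * (γ s).im)
      = fun s => norm (γ s) ^ 2 := by
    funext s; rw [Complex.sq_norm, Complex.normSq_apply]
  rw [← hfun]
  refine h2.congr_deriv ?_
  simp [Complex.mul_re]
  ring

private lemma hasDerivAt_cabs {γ : ℝ → ℂ} {γ' : ℂ} {t : ℝ} (h : HasDerivAt γ γ' t)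
    (hne : γ t ≠ 0) :
    HasDerivAt (fun s => norm (γ s))
      (((starRingEnd ℂ) (γ t) * γ').re / norm (γ t)) t := by
  have habs : (0:ℝ) < norm (γ t) := norm_pos_iff.mpr hne
  have h3 := (Real.hasDerivAt_sqrt
      (ne_of_gt (by positivity : (0:ℝ) < norm (γ t) ^ 2))).comp t (hasDerivAt_abs_sq h)
  have hfun : (fun s => Real.sqrt (norm (γ s) ^ 2)) = fun s => norm (γ s) := by
    funext s; exact Real.sqrt_sq (norm_nonneg _)
  have h4 : HasDerivAt (fun s => norm (γ s))
      (1 / (2 * Real.sqrt (norm (γ t) ^ 2)) * (2 * ((starRingEnd ℂ) (γ t) * γ').re)) t := by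
    rw [← hfun]; exact h3
  convert h4 using 1
  rw [Real.sqrt_sq (norm_nonneg _)]
  field_simp


private lemma HasDerivAt.cconj {γ : ℝ → ℂ} {γ' : ℂ} {t : ℝ} (h : HasDerivAt γ γ' t) :
    HasDerivAt (fun s => (starRingEnd ℂ) (γ s)) ((starRingEnd ℂ) γ') t := by
  simpa [Complex.star_def] using h.star

private lemma hasDerivAt_phi (lam ε : ℝ) (hε : 0 < ε) {γ : ℝ → ℂ} {γ' : ℂ} {t : ℝ}
    (h : HasDerivAt γ γ' t) :
    HasDerivAt (fun s => 2*ε*lam*norm (γ s)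
        + 2*lam*((norm (γ s))^2 - ε^2) * Real.log (ε + norm (γ s)))
      (2*lam*(Real.log ((ε + norm (γ t))^2) + 1) * (((starRingEnd ℂ) (γ t)) * γ').re) t := by
  set F : ℝ → ℝ := fun r => 2*ε*lam*r + 2*lam*(r^2 - ε^2) * Real.log (ε + r) with hF_def
  have hF : ∀ r : ℝ, 0 ≤ r → HasDerivAt F (2*lam*(Real.log ((ε + r)^2) + 1) * r) r := by
    intro r hr
    have hpos : (0:ℝ) < ε + r := by linarith
    have d1 : HasDerivAt (fun r : ℝ => 2*ε*lam*r) (2*ε*lam) r := by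
      simpa using (hasDerivAt_id r).const_mul (2*ε*lam)
    have d2 : HasDerivAt (fun r : ℝ => r^2 - ε^2) (2*r) r := by
      simpa using (hasDerivAt_pow 2 r).sub_const (ε^2)
    have d3 : HasDerivAt (fun r : ℝ => Real.log (ε + r)) (1/(ε+r)) r := by
      have h1 : HasDerivAt (fun r : ℝ => ε + r) 1 r := by
        simpa using (hasDerivAt_id r).const_add ε
      simpa using h1.log (ne_of_gt hpos)
    have d4 := d1.add ((d2.const_mul (2*lam)).mul d3)
    rw [hF_def]
    refine d4.congr_deriv ?_
    rw [Real.log_pow]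
    field_simp
    ring
  rcases eq_or_ne (γ t) 0 with h0 | hne
  · have htarget : 2*lam*(Real.log ((ε + norm (γ t))^2) + 1)
        * (((starRingEnd ℂ) (γ t)) * γ').re = 0 := by
      rw [h0]; simp
    rw [htarget]
    have hF0 : HasDerivAt F 0 0 := by simpa using hF 0 le_rfl
    rw [hasDerivAt_iff_isLittleO]
    simp only [smul_zero, sub_zero]
    have h1 : (fun r => F r - F 0) =o[nhds 0] (fun r => r) := by
      have := hasDerivAt_iff_isLittleO.mp hF0
      simpa using this
    have h2 : Filter.Tendsto (fun s => norm (γ s)) (nhds t) (nhds 0) := by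
      have hc : ContinuousAt (fun s => norm (γ s)) t :=
        continuous_norm.continuousAt.comp h.differentiableAt.continuousAt
      simpa [ContinuousAt, h0] using hc
    have h3 := h1.comp_tendsto h2
    have h4 : (fun s => norm (γ s)) =O[nhds t] (fun s => s - t) := by
      have hO := h.hasFDerivAt.isBigO_sub
      simpa [h0] using hO.norm_left
    have h5 := h3.trans_isBigO h4
    have hgoal : (fun s => F (norm (γ s)) - F 0) =o[nhds t] (fun s => s - t) := by
      exact h5
    simp only [hF_def] at hgoal
    simpa [h0] using hgoal
  · have habs : (0:ℝ) < norm (γ t) := norm_pos_iff.mpr hne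
    have hcomp := (hF (norm (γ t)) (norm_nonneg _)).comp t (hasDerivAt_cabs h hne)
    have hfun : HasDerivAt (fun s => F (norm (γ s)))
        (2*lam*(Real.log ((ε + norm (γ t))^2) + 1) * norm (γ t)
          * ((((starRingEnd ℂ) (γ t)) * γ').re / norm (γ t))) t := hcomp
    rw [hF_def] at hfun
    convert hfun using 1
    field_simp


/-- Conservation of the regularized energy for the regularized logarithmic
    Schrödinger equation in 1D with periodic boundary conditions. -/
theorem rlogse_energy_conservation_1d
    (L : ℝ) (hL : 0 < L) (lam ε : ℝ) (hε : 0 < ε)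
    (u : ℝ → ℝ → ℂ)
    (hreg : ContDiff ℝ 2 (fun p : ℝ × ℝ => u p.1 p.2))
    (hper : ∀ t x : ℝ, u t (x + L) = u t x)
    (hpde : ∀ t x : ℝ,
      Complex.I * deriv (fun s => u s x) t + deriv (deriv (u t)) x
        = (lam : ℂ) * u t x * (Real.log ((ε + norm (u t x)) ^ 2) : ℂ)) :
    ∀ t₁ t₂ : ℝ,
      (∫ x in (0:ℝ)..L,
          ((norm (deriv (u t₁) x)) ^ 2
            + 2 * ε * lam * norm (u t₁ x)
            + 2 * lam * ((norm (u t₁ x)) ^ 2 - ε ^ 2)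
                * Real.log (ε + norm (u t₁ x))))
        = ∫ x in (0:ℝ)..L,
            ((norm (deriv (u t₂) x)) ^ 2
              + 2 * ε * lam * norm (u t₂ x)
              + 2 * lam * ((norm (u t₂ x)) ^ 2 - ε ^ 2)
                  * Real.log (ε + norm (u t₂ x))) := by
  intro t₁ t₂
  have hv : ContDiff ℝ 2 (fun p : ℝ × ℝ => u p.1 p.2) := hreg
  set v : ℝ × ℝ → ℂ := fun p : ℝ × ℝ => u p.1 p.2 with hv_def
  -- first and second derivatives
  have hd1 : ∀ p, HasFDerivAt v (fderiv ℝ v p) p := fun p =>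
    (hv.differentiable (by norm_num)).differentiableAt.hasFDerivAt
  have hv2 : ContDiff ℝ 1 (fderiv ℝ v) := hv.fderiv_right (by norm_num)
  have hc1 : Continuous (fderiv ℝ v) := hv2.continuous
  have hd2 : ∀ p, HasFDerivAt (fderiv ℝ v) (fderiv ℝ (fderiv ℝ v) p) p := fun p =>
    (hv2.differentiable one_ne_zero).differentiableAt.hasFDerivAt
  have hc2 : Continuous (fderiv ℝ (fderiv ℝ v)) := hv2.continuous_fderiv one_ne_zero
  have hsymm : ∀ p a b, fderiv ℝ (fderiv ℝ v) p a b = fderiv ℝ (fderiv ℝ v) p b a :=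
    fun p a b => second_derivative_symmetric hd1 (hd2 p) a b
  set ut : ℝ × ℝ → ℂ := fun p => fderiv ℝ v p (1, 0) with hut_def
  set ux : ℝ × ℝ → ℂ := fun p => fderiv ℝ v p (0, 1) with hux_def
  set uxx : ℝ × ℝ → ℂ := fun p => fderiv ℝ (fderiv ℝ v) p (0, 1) (0, 1) with huxx_def
  set uxt : ℝ × ℝ → ℂ := fun p => fderiv ℝ (fderiv ℝ v) p (1, 0) (0, 1) with huxt_def
  -- continuity
  have hcv : Continuous v := hv.continuous
  have hcut : Continuous ut := hc1.clm_apply continuous_const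
  have hcux : Continuous ux := hc1.clm_apply continuous_const
  have hcuxx : Continuous uxx := (hc2.clm_apply continuous_const).clm_apply continuous_const
  have hcuxt : Continuous uxt := (hc2.clm_apply continuous_const).clm_apply continuous_const
  -- curried derivatives
  have hι : ∀ (x t : ℝ), HasDerivAt (fun s : ℝ => (s, x)) ((1:ℝ), (0:ℝ)) t := fun x t =>
    (hasDerivAt_id t).prodMk (hasDerivAt_const t x)
  have hκ : ∀ (t x : ℝ), HasDerivAt (fun y : ℝ => (t, y)) ((0:ℝ), (1:ℝ)) x := fun t x =>
    (hasDerivAt_const x t).prodMk (hasDerivAt_id x)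
  have hut' : ∀ t x, HasDerivAt (fun s => u s x) (ut (t, x)) t := fun t x =>
    by have := (hd1 (t, x)).comp_hasDerivAt t (hι x t); exact this
  have hux' : ∀ t x, HasDerivAt (fun y => u t y) (ux (t, x)) x := fun t x =>
    (hd1 (t, x)).comp_hasDerivAt x (hκ t x)
  have hDux : ∀ p, HasFDerivAt ux ((fderiv ℝ (fderiv ℝ v) p).flip (0, 1)) p := by
    intro p
    have := (hd2 p).clm_apply (hasFDerivAt_const ((0:ℝ), (1:ℝ)) p)
    simpa using this
  have hDut : ∀ p, HasFDerivAt ut ((fderiv ℝ (fderiv ℝ v) p).flip (1, 0)) p := by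
    intro p
    have := (hd2 p).clm_apply (hasFDerivAt_const ((1:ℝ), (0:ℝ)) p)
    simpa using this
  have huxx' : ∀ t x, HasDerivAt (fun y => ux (t, y)) (uxx (t, x)) x := fun t x =>
    (hDux (t, x)).comp_hasDerivAt x (hκ t x)
  have huxt' : ∀ t x, HasDerivAt (fun s => ux (s, x)) (uxt (t, x)) t := fun t x =>
    by have := (hDux (t, x)).comp_hasDerivAt t (hι x t); exact this
  have hutx' : ∀ t x, HasDerivAt (fun y => ut (t, y)) (uxt (t, x)) x := by
    intro t x
    have := (hDut (t, x)).comp_hasDerivAt x (hκ t x)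
    have he : (fderiv ℝ (fderiv ℝ v) (t, x)).flip (1, 0) (0, 1) = uxt (t, x) :=
      hsymm (t, x) (0, 1) (1, 0)
    rw [he] at this
    exact this
  -- PDE in terms of ut, uxx
  have hpde' : ∀ t x : ℝ, Complex.I * ut (t, x) + uxx (t, x)
      = (lam : ℂ) * v (t, x) * (Real.log ((ε + norm (v (t, x))) ^ 2) : ℂ) := by
    intro t x
    have h1 : deriv (fun s => u s x) t = ut (t, x) := (hut' t x).deriv
    have h2 : deriv (u t) = fun y => ux (t, y) := funext fun y => (hux' t y).deriv
    have h3 : deriv (deriv (u t)) x = uxx (t, x) := by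
      rw [h2]; exact (huxx' t x).deriv
    rw [← h1, ← h3]
    exact hpde t x
  -- periodicity
  have huxLper : ∀ t, ux (t, L) = ux (t, 0) := by
    intro t
    rw [← (hux' t L).deriv, ← (hux' t 0).deriv]
    have h1 : (fun y => u t y) = fun y => u t (y + L) := funext fun y => (hper t y).symm
    have h2 : deriv (fun y => u t y) 0 = deriv (fun y => u t y) (0 + L) := by
      conv_lhs => rw [h1]
      exact deriv_comp_add_const _ _ _
    rw [zero_add] at h2
    exact h2.symm
  have hutLper : ∀ t, ut (t, L) = ut (t, 0) := by
    intro t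
    rw [← (hut' t L).deriv, ← (hut' t 0).deriv]
    have h1 : (fun s => u s L) = fun s => u s 0 := funext fun s => by rw [← hper s 0, zero_add]
    rw [h1]
  have hvLper : ∀ t, v (t, L) = v (t, 0) := fun t => by
    have := hper t 0; rw [zero_add] at this; exact this
  -- energy density and its t-derivative
  set e : ℝ × ℝ → ℝ := fun p => (norm (ux p))^2 + (2*ε*lam*norm (v p)
      + 2*lam*((norm (v p))^2 - ε^2) * Real.log (ε + norm (v p))) with he_def
  set et : ℝ × ℝ → ℝ := fun p => 2 * ((starRingEnd ℂ) (ux p) * uxt p).re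
      + 2*lam*(Real.log ((ε + norm (v p))^2) + 1) * ((starRingEnd ℂ) (v p) * ut p).re
      with het_def
  have het' : ∀ t x, HasDerivAt (fun s => e (s, x)) (et (t, x)) t := by
    intro t x
    have h1 := hasDerivAt_abs_sq (huxt' t x)
    have h2 := hasDerivAt_phi lam ε hε (hut' t x)
    exact h1.add h2
  -- flux and its x-derivative
  set w : ℝ × ℝ → ℝ := fun p => 2 * ((starRingEnd ℂ) (ux p) * ut p).re
      + 2*lam*(Complex.I * ((starRingEnd ℂ) (v p) * ux p)).re with hw_def
  have hwx' : ∀ t x, HasDerivAt (fun y => w (t, y)) (et (t, x)) x := by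
    intro t x
    have h1 := (hasDerivAt_creal (((huxx' t x).cconj).mul (hutx' t x))).const_mul 2
    have h2 := (hasDerivAt_creal ((((hux' t x).cconj).mul (huxx' t x)).const_mul
        Complex.I)).const_mul (2*lam)
    have hD := h1.add h2
    refine hD.congr_deriv ?_
    have hc : uxx (t, x) = (lam : ℂ) * v (t, x)
        * (Real.log ((ε + norm (v (t, x))) ^ 2) : ℂ) - Complex.I * ut (t, x) := by
      have h := hpde' t x
      linear_combination h
    rw [het_def]
    simp only [hc]
    simp [Complex.mul_re, Complex.mul_im, Complex.add_re, Complex.add_im, Complex.sub_re,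
      Complex.sub_im, Complex.conj_re, Complex.conj_im, Complex.I_re, Complex.I_im,
      Complex.ofReal_re, Complex.ofReal_im]
    ring
  -- continuity of e and et
  have hcabs : Continuous fun p => norm (v p) := continuous_norm.comp hcv
  have hlogc : Continuous fun p => Real.log (ε + norm (v p)) :=
    (continuous_const.add hcabs).log fun p => ne_of_gt (show (0:ℝ) < ε + ‖v p‖ by linarith [norm_nonneg (v p)])
  have hce : Continuous e := by
    rw [he_def]
    exact ((continuous_norm.comp hcux).pow 2).add
      ((continuous_const.mul hcabs).add
        ((continuous_const.mul ((hcabs.pow 2).sub continuous_const)).mul hlogc))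
  have hlog2c : Continuous fun p => Real.log ((ε + norm (v p)) ^ 2) :=
    ((continuous_const.add hcabs).pow 2).log fun p => pow_ne_zero 2 (ne_of_gt (show (0:ℝ) < ε + ‖v p‖ by linarith [norm_nonneg (v p)]))
  have hcre1 : Continuous fun p => ((starRingEnd ℂ) (ux p) * uxt p).re :=
    Complex.continuous_re.comp ((continuous_conj.comp hcux).mul hcuxt)
  have hcre2 : Continuous fun p => ((starRingEnd ℂ) (v p) * ut p).re :=
    Complex.continuous_re.comp ((continuous_conj.comp hcv).mul hcut)
  have hcet : Continuous et := by
    rw [het_def]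
    exact (continuous_const.mul hcre1).add
      ((continuous_const.mul (hlog2c.add continuous_const)).mul hcre2)
  -- the energy has derivative 0 everywhere
  have hE : ∀ t₀ : ℝ, HasDerivAt (fun t => ∫ x in (0:ℝ)..L, e (t, x)) 0 t₀ := by
    intro t₀
    obtain ⟨C, hC⟩ := ((isCompact_Icc (a := t₀ - 1) (b := t₀ + 1)).prod
      (isCompact_uIcc (a := (0:ℝ)) (b := L))).exists_bound_of_continuousOn hcet.continuousOn
    have key := intervalIntegral.hasDerivAt_integral_of_dominated_loc_of_deriv_le
      (F := fun t x => e (t, x)) (F' := fun t x => et (t, x)) (bound := fun _ => C)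
      (a := 0) (b := L) (μ := volume) (x₀ := t₀) (Metric.ball_mem_nhds t₀ one_pos)
      (Filter.Eventually.of_forall fun t =>
        (hce.comp (continuous_const.prodMk continuous_id)).aestronglyMeasurable)
      ((hce.comp (continuous_const.prodMk continuous_id)).intervalIntegrable 0 L)
      ((hcet.comp (continuous_const.prodMk continuous_id)).aestronglyMeasurable)
      (Filter.Eventually.of_forall fun x hx t ht => by
        have h5 : |t - t₀| < 1 := by simpa [Real.dist_eq] using ht
        have h6 := abs_lt.mp h5
        exact hC (t, x) ⟨⟨by linarith [h6.1], by linarith [h6.2]⟩, Set.uIoc_subset_uIcc hx⟩)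
      intervalIntegrable_const
      (Filter.Eventually.of_forall fun x hx t ht => het' t x)
    have h2 := key.2
    have hftc : ∫ x in (0:ℝ)..L, et (t₀, x) = w (t₀, L) - w (t₀, 0) :=
      intervalIntegral.integral_eq_sub_of_hasDerivAt (fun x hx => hwx' t₀ x)
        ((hcet.comp (continuous_const.prodMk continuous_id)).intervalIntegrable 0 L)
    have hwper : w (t₀, L) = w (t₀, 0) := by
      simp only [hw_def]
      rw [huxLper t₀, hutLper t₀, hvLper t₀]
    rw [hftc, hwper, sub_self] at h2
    exact h2
  have hconst := is_const_of_deriv_eq_zero (f := fun t => ∫ x in (0:ℝ)..L, e (t, x))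
    (fun t => (hE t).differentiableAt) (fun t => (hE t).deriv) t₁ t₂
  have hEeq : ∀ t : ℝ, (∫ x in (0:ℝ)..L,
      ((norm (deriv (u t) x)) ^ 2
        + 2 * ε * lam * norm (u t x)
        + 2 * lam * ((norm (u t x)) ^ 2 - ε ^ 2)
            * Real.log (ε + norm (u t x))))
      = ∫ x in (0:ℝ)..L, e (t, x) := by
    intro t
    apply intervalIntegral.integral_congr
    intro x hx
    have hd : deriv (u t) x = ux (t, x) := (hux' t x).deriv
    simp only [he_def, hv_def, hd]
    ring
  rw [hEeq t₁, hEeq t₂]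
  exact hconst
end

section
/- Let L₁, L₂ > 0 and λ ∈ ℝ. Let u : ℝ → ℝ → ℝ → ℂ (time and the two space variables) be twice continuously differentiable jointly in (t,x,y), L₁-periodic in x and L₂-periodic in y, nowhere vanishing (u t x y ≠ 0 for all t, x, y), and satisfy the logarithmic Schrödinger equation i ∂ₜu(t,x,y) + ∂ₓₓu(t,x,y) + ∂ᵧᵧu(t,x,y) = λ · u(t,x,y) · ln(|u(t,x,y)|²) for all t, x, y. Then the energy E(t) = ∫_{0}^{L₁} ∫_{0}^{L₂} ( |∂ₓu|² + |∂ᵧu|² + λ|u|² ln(|u|²) ) dy dx is independent of t, i.e. E(t₁) = E(t₂) for all t₁, t₂ ∈ ℝ. -/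
open Complex MeasureTheory intervalIntegral Set

noncomputable section LogSEAux

def Dv (v : ℝ × ℝ × ℝ) (U : ℝ × ℝ × ℝ → ℂ) : ℝ × ℝ × ℝ → ℂ :=
  fun p => fderiv ℝ U p v

def pe1 : ℝ × ℝ × ℝ := (1, 0, 0)
def pe2 : ℝ × ℝ × ℝ := (0, 1, 0)
def pe3 : ℝ × ℝ × ℝ := (0, 0, 1)

lemma Dv_contDiff {U : ℝ × ℝ × ℝ → ℂ} {n : ℕ} (hU : ContDiff ℝ (n + 1) U) (v : ℝ × ℝ × ℝ) :
    ContDiff ℝ n (Dv v U) := by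
  have h := hU.fderiv_right (m := n) le_rfl
  exact (ContinuousLinearMap.apply ℝ ℂ v).contDiff.comp h

lemma Dv_contDiff_one {U : ℝ × ℝ × ℝ → ℂ} (hU : ContDiff ℝ 2 U) (v : ℝ × ℝ × ℝ) :
    ContDiff ℝ 1 (Dv v U) := by
  have : ContDiff ℝ ((1:ℕ) + 1) U := by exact_mod_cast hU
  exact_mod_cast Dv_contDiff this v

lemma Dv_continuous {U : ℝ × ℝ × ℝ → ℂ} (hU : ContDiff ℝ 1 U) (v : ℝ × ℝ × ℝ) :
    Continuous (Dv v U) := by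
  have : ContDiff ℝ ((0:ℕ) + 1) U := by exact_mod_cast hU
  exact ((Dv_contDiff this v)).continuous

lemma Dv2_continuous {U : ℝ × ℝ × ℝ → ℂ} (hU : ContDiff ℝ 2 U) (v w : ℝ × ℝ × ℝ) :
    Continuous (Dv v (Dv w U)) :=
  Dv_continuous (Dv_contDiff_one hU w) v

lemma Dv_symm {U : ℝ × ℝ × ℝ → ℂ} (hU : ContDiff ℝ 2 U) (v w p : ℝ × ℝ × ℝ) :
    Dv v (Dv w U) p = Dv w (Dv v U) p := by
  have hfd : Differentiable ℝ (fderiv ℝ U) :=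
    (hU.fderiv_right (m := 1) le_rfl).differentiable one_ne_zero
  have key : ∀ a b : ℝ × ℝ × ℝ, Dv a (Dv b U) p = fderiv ℝ (fderiv ℝ U) p a b := by
    intro a b
    have : Dv b U = fun q => (fderiv ℝ U q) b := rfl
    rw [Dv, this]
    rw [fderiv_clm_apply (hfd p) (differentiableAt_const b)]
    simp
  rw [key v w, key w v]
  exact (hU.contDiffAt.isSymmSndFDerivAt (by simp)) v w

lemma Dv_periodic {U : ℝ × ℝ × ℝ → ℂ} (hU : ContDiff ℝ 1 U) (c : ℝ × ℝ × ℝ)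
    (hper : ∀ p, U (p + c) = U p) (v : ℝ × ℝ × ℝ) (p : ℝ × ℝ × ℝ) :
    Dv v U (p + c) = Dv v U p := by
  have hUe : (fun q => U (q + c)) = U := funext hper
  have hd : DifferentiableAt ℝ U (p + c) := (hU.differentiable one_ne_zero) _
  have ht : HasFDerivAt (fun q : ℝ × ℝ × ℝ => q + c) (ContinuousLinearMap.id ℝ _) p := by
    simpa using (hasFDerivAt_id p).add_const c
  have hc : HasFDerivAt (fun q => U (q + c))
      ((fderiv ℝ U (p + c)).comp (ContinuousLinearMap.id ℝ _)) p :=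
    hd.hasFDerivAt.comp p ht
  rw [hUe] at hc
  have : fderiv ℝ U p = (fderiv ℝ U (p + c)).comp (ContinuousLinearMap.id ℝ _) := hc.fderiv
  simp [Dv, this]

lemma hasDerivAt_slice1 {U : ℝ × ℝ × ℝ → ℂ} (hU : ContDiff ℝ 1 U) (t x y : ℝ) :
    HasDerivAt (fun s => U (s, x, y)) (Dv pe1 U (t, x, y)) t := by
  have hf := ((hU.differentiable one_ne_zero) (t, x, y)).hasFDerivAt
  have hg : HasDerivAt (fun s : ℝ => ((s, x, y) : ℝ × ℝ × ℝ)) pe1 t :=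
    (hasDerivAt_id t).prodMk (hasDerivAt_const t ((x : ℝ), (y : ℝ)))
  exact hf.comp_hasDerivAt t hg

lemma hasDerivAt_slice2 {U : ℝ × ℝ × ℝ → ℂ} (hU : ContDiff ℝ 1 U) (t x y : ℝ) :
    HasDerivAt (fun x' => U (t, x', y)) (Dv pe2 U (t, x, y)) x := by
  have hf := ((hU.differentiable one_ne_zero) (t, x, y)).hasFDerivAt
  have hg : HasDerivAt (fun x' : ℝ => ((t, x', y) : ℝ × ℝ × ℝ)) pe2 x :=
    (hasDerivAt_const x t).prodMk ((hasDerivAt_id x).prodMk (hasDerivAt_const x y))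
  exact hf.comp_hasDerivAt x hg

lemma hasDerivAt_slice3 {U : ℝ × ℝ × ℝ → ℂ} (hU : ContDiff ℝ 1 U) (t x y : ℝ) :
    HasDerivAt (fun y' => U (t, x, y')) (Dv pe3 U (t, x, y)) y := by
  have hf := ((hU.differentiable one_ne_zero) (t, x, y)).hasFDerivAt
  have hg : HasDerivAt (fun y' : ℝ => ((t, x, y') : ℝ × ℝ × ℝ)) pe3 y :=
    (hasDerivAt_const y t).prodMk ((hasDerivAt_const y x).prodMk (hasDerivAt_id y))
  exact hf.comp_hasDerivAt y hg

lemma hasDerivAt_re_comp {w : ℝ → ℂ} {w' : ℂ} {t : ℝ} (h : HasDerivAt w w' t) :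
    HasDerivAt (fun s => (w s).re) w'.re t := by
  simpa [Function.comp_def] using (Complex.reCLM.hasFDerivAt.comp_hasDerivAt t h)

lemma hasDerivAt_conj_comp {w : ℝ → ℂ} {w' : ℂ} {t : ℝ} (h : HasDerivAt w w' t) :
    HasDerivAt (fun s => (starRingEnd ℂ) (w s)) ((starRingEnd ℂ) w') t := by
  simpa [Function.comp_def] using ((Complex.conjCLE.toContinuousLinearMap).hasFDerivAt.comp_hasDerivAt t h)

lemma hasDerivAt_normSq_comp {w : ℝ → ℂ} {w' : ℂ} {t : ℝ} (h : HasDerivAt w w' t) :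
    HasDerivAt (fun s => Complex.normSq (w s)) (2 * ((starRingEnd ℂ) (w t) * w').re) t := by
  have h2 := hasDerivAt_re_comp ((hasDerivAt_conj_comp h).mul h)
  have e : (fun s => ((starRingEnd ℂ) (w s) * w s).re) = fun s => Complex.normSq (w s) := by
    funext s; simp [Complex.mul_re, Complex.normSq_apply]
  simp only [Pi.mul_apply] at h2
  rw [e] at h2
  convert h2 using 1
  simp [Complex.mul_re, Complex.add_re]
  ring

lemma hasDerivAt_nlogn_comp {w : ℝ → ℂ} {w' : ℂ} {t : ℝ} (h : HasDerivAt w w' t)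
    (hw : w t ≠ 0) :
    HasDerivAt (fun s => Complex.normSq (w s) * Real.log (Complex.normSq (w s)))
      ((Real.log (Complex.normSq (w t)) + 1) * (2 * ((starRingEnd ℂ) (w t) * w').re)) t := by
  have hn := hasDerivAt_normSq_comp h
  have hpos : 0 < Complex.normSq (w t) := Complex.normSq_pos.2 hw
  have hlog := (Real.hasDerivAt_log hpos.ne').comp t hn
  have := hn.mul hlog
  convert this using 1
  all_goals try rfl
  simp only [Function.comp_apply]
  field_simp

lemma logse_key_algebra (lam L : ℝ) (a v px qy pxx qyy utx uty : ℂ)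
    (hpde : Complex.I * v + pxx + qyy = (lam : ℂ) * a * (L : ℂ)) :
    2 * ((starRingEnd ℂ) px * utx).re + 2 * ((starRingEnd ℂ) qy * uty).re
      + lam * ((L + 1) * (2 * ((starRingEnd ℂ) a * v).re))
    = (2 * (((starRingEnd ℂ) pxx * v).re + ((starRingEnd ℂ) px * utx).re)
        + 2 * lam * ((Complex.I * (starRingEnd ℂ) px * px).re
            + (Complex.I * (starRingEnd ℂ) a * pxx).re))
      + (2 * (((starRingEnd ℂ) qyy * v).re + ((starRingEnd ℂ) qy * uty).re)
        + 2 * lam * ((Complex.I * (starRingEnd ℂ) qy * qy).re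
            + (Complex.I * (starRingEnd ℂ) a * qyy).re)) := by
  have hIv : Complex.I * v = (lam : ℂ) * a * (L : ℂ) - pxx - qyy := by
    linear_combination hpde
  have hv : v = -Complex.I * ((lam : ℂ) * a * (L : ℂ) - pxx - qyy) := by
    rw [← hIv, ← mul_assoc]
    simp [Complex.I_mul_I]
  subst hv
  simp only [Complex.mul_re, Complex.mul_im, Complex.I_re, Complex.I_im,
    Complex.conj_re, Complex.conj_im, Complex.ofReal_re, Complex.ofReal_im,
    Complex.sub_re, Complex.sub_im, Complex.neg_re, Complex.neg_im]
  ring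

lemma intervalIntegral_swap_continuous (f : ℝ → ℝ → ℝ) (a b c d : ℝ)
    (hf : Continuous fun p : ℝ × ℝ => f p.1 p.2) :
    ∫ x in a..b, ∫ y in c..d, f x y = ∫ y in c..d, ∫ x in a..b, f x y := by
  have hint : Integrable (fun p : ℝ × ℝ => f p.1 p.2)
      ((volume.restrict (Set.uIoc a b)).prod (volume.restrict (Set.uIoc c d))) := by
    rw [Measure.prod_restrict]
    apply (hf.continuousOn.integrableOn_compact
      ((isCompact_uIcc (a := a) (b := b)).prod (isCompact_uIcc (a := c) (b := d)))).mono_set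
    exact Set.prod_mono Set.uIoc_subset_uIcc Set.uIoc_subset_uIcc
  have swap := MeasureTheory.integral_integral_swap (f := fun x y => f x y)
    (μ := volume.restrict (Set.uIoc a b)) (ν := volume.restrict (Set.uIoc c d)) hint
  simp only [intervalIntegral_eq_integral_uIoc, MeasureTheory.integral_smul]
  rw [swap, smul_comm]

/-- energy density -/
def eF (lam : ℝ) (U : ℝ × ℝ × ℝ → ℂ) (p : ℝ × ℝ × ℝ) : ℝ :=
  Complex.normSq (Dv pe2 U p) + Complex.normSq (Dv pe3 U p)
    + lam * (Complex.normSq (U p) * Real.log (Complex.normSq (U p)))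

/-- time derivative of energy density -/
def eFt (lam : ℝ) (U : ℝ × ℝ × ℝ → ℂ) (p : ℝ × ℝ × ℝ) : ℝ :=
  2 * ((starRingEnd ℂ) (Dv pe2 U p) * Dv pe1 (Dv pe2 U) p).re
    + 2 * ((starRingEnd ℂ) (Dv pe3 U p) * Dv pe1 (Dv pe3 U) p).re
    + lam * ((Real.log (Complex.normSq (U p)) + 1)
        * (2 * ((starRingEnd ℂ) (U p) * Dv pe1 U p).re))

/-- x-flux -/
def eP (lam : ℝ) (U : ℝ × ℝ × ℝ → ℂ) (p : ℝ × ℝ × ℝ) : ℝ :=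
  2 * ((starRingEnd ℂ) (Dv pe2 U p) * Dv pe1 U p).re
    + 2 * lam * (Complex.I * (starRingEnd ℂ) (U p) * Dv pe2 U p).re

/-- y-flux -/
def eQ (lam : ℝ) (U : ℝ × ℝ × ℝ → ℂ) (p : ℝ × ℝ × ℝ) : ℝ :=
  2 * ((starRingEnd ℂ) (Dv pe3 U p) * Dv pe1 U p).re
    + 2 * lam * (Complex.I * (starRingEnd ℂ) (U p) * Dv pe3 U p).re

/-- x-derivative of x-flux -/
def ePd (lam : ℝ) (U : ℝ × ℝ × ℝ → ℂ) (p : ℝ × ℝ × ℝ) : ℝ :=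
  2 * (((starRingEnd ℂ) (Dv pe2 (Dv pe2 U) p) * Dv pe1 U p).re
      + ((starRingEnd ℂ) (Dv pe2 U p) * Dv pe2 (Dv pe1 U) p).re)
    + 2 * lam * ((Complex.I * (starRingEnd ℂ) (Dv pe2 U p) * Dv pe2 U p).re
      + (Complex.I * (starRingEnd ℂ) (U p) * Dv pe2 (Dv pe2 U) p).re)

/-- y-derivative of y-flux -/
def eQd (lam : ℝ) (U : ℝ × ℝ × ℝ → ℂ) (p : ℝ × ℝ × ℝ) : ℝ :=
  2 * (((starRingEnd ℂ) (Dv pe3 (Dv pe3 U) p) * Dv pe1 U p).re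
      + ((starRingEnd ℂ) (Dv pe3 U p) * Dv pe3 (Dv pe1 U) p).re)
    + 2 * lam * ((Complex.I * (starRingEnd ℂ) (Dv pe3 U p) * Dv pe3 U p).re
      + (Complex.I * (starRingEnd ℂ) (U p) * Dv pe3 (Dv pe3 U) p).re)

section pointwise

variable {U : ℝ × ℝ × ℝ → ℂ} {lam : ℝ}

lemma hasDerivAt_eF_t (hU : ContDiff ℝ 2 U) (hne : ∀ p, U p ≠ 0) (t x y : ℝ) :
    HasDerivAt (fun s => eF lam U (s, x, y)) (eFt lam U (t, x, y)) t := by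
  have hU1 : ContDiff ℝ 1 U := hU.of_le one_le_two
  have h2 := hasDerivAt_normSq_comp (hasDerivAt_slice1 (Dv_contDiff_one hU pe2) t x y)
  have h3 := hasDerivAt_normSq_comp (hasDerivAt_slice1 (Dv_contDiff_one hU pe3) t x y)
  have h0 := hasDerivAt_nlogn_comp (hasDerivAt_slice1 hU1 t x y) (hne (t, x, y))
  have := (h2.add h3).add (h0.const_mul lam)
  convert this using 1
  all_goals rfl

lemma hasDerivAt_eP_x (hU : ContDiff ℝ 2 U) (t x y : ℝ) :
    HasDerivAt (fun x' => eP lam U (t, x', y)) (ePd lam U (t, x, y)) x := by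
  have hU1 : ContDiff ℝ 1 U := hU.of_le one_le_two
  have hx2 := hasDerivAt_slice2 (Dv_contDiff_one hU pe2) t x y
  have hx1 := hasDerivAt_slice2 (Dv_contDiff_one hU pe1) t x y
  have hx0 := hasDerivAt_slice2 hU1 t x y
  have hterm1 := hasDerivAt_re_comp ((hasDerivAt_conj_comp hx2).mul hx1)
  have hterm2 := hasDerivAt_re_comp
    (((hasDerivAt_const x Complex.I).mul (hasDerivAt_conj_comp hx0)).mul hx2)
  have := (hterm1.const_mul (2:ℝ)).add (hterm2.const_mul (2*lam))
  have heq : (fun x' => 2 * ((starRingEnd ℂ) (Dv pe2 U (t, x', y)) * Dv pe1 U (t, x', y)).re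
      + 2 * lam * (Complex.I * (starRingEnd ℂ) (U (t, x', y)) * Dv pe2 U (t, x', y)).re)
      = fun x' => eP lam U (t, x', y) := by
    funext x'; unfold eP; ring
  simp only [Pi.mul_apply, Pi.add_def] at this
  rw [heq] at this
  convert this using 1
  all_goals try rfl
  all_goals (unfold ePd; simp only [Complex.add_re, zero_mul, zero_add]; try ring)

lemma hasDerivAt_eQ_y (hU : ContDiff ℝ 2 U) (t x y : ℝ) :
    HasDerivAt (fun y' => eQ lam U (t, x, y')) (eQd lam U (t, x, y)) y := by
  have hU1 : ContDiff ℝ 1 U := hU.of_le one_le_two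
  have hx2 := hasDerivAt_slice3 (Dv_contDiff_one hU pe3) t x y
  have hx1 := hasDerivAt_slice3 (Dv_contDiff_one hU pe1) t x y
  have hx0 := hasDerivAt_slice3 hU1 t x y
  have hterm1 := hasDerivAt_re_comp ((hasDerivAt_conj_comp hx2).mul hx1)
  have hterm2 := hasDerivAt_re_comp
    (((hasDerivAt_const y Complex.I).mul (hasDerivAt_conj_comp hx0)).mul hx2)
  have := (hterm1.const_mul (2:ℝ)).add (hterm2.const_mul (2*lam))
  have heq : (fun y' => 2 * ((starRingEnd ℂ) (Dv pe3 U (t, x, y')) * Dv pe1 U (t, x, y')).re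
      + 2 * lam * (Complex.I * (starRingEnd ℂ) (U (t, x, y')) * Dv pe3 U (t, x, y')).re)
      = fun y' => eQ lam U (t, x, y') := by
    funext y'; unfold eQ; ring
  simp only [Pi.mul_apply, Pi.add_def] at this
  rw [heq] at this
  convert this using 1
  all_goals try rfl
  all_goals (unfold eQd; simp only [Complex.add_re, zero_mul, zero_add]; try ring)

end pointwise



section continuity

variable {U : ℝ × ℝ × ℝ → ℂ} {lam : ℝ}

lemma cont_log (hU : ContDiff ℝ 1 U) (hne : ∀ p, U p ≠ 0) :
    Continuous fun p => Real.log (Complex.normSq (U p)) := by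
  exact (Complex.continuous_normSq.comp hU.continuous).log
    (fun p => (Complex.normSq_pos.2 (hne p)).ne')

lemma cont_eF (hU : ContDiff ℝ 2 U) (hne : ∀ p, U p ≠ 0) : Continuous (eF lam U) := by
  have hU1 : ContDiff ℝ 1 U := hU.of_le one_le_two
  have c0 : Continuous U := hU.continuous
  have c2 := Dv_continuous hU1 pe2
  have c3 := Dv_continuous hU1 pe3
  exact ((Complex.continuous_normSq.comp c2).add (Complex.continuous_normSq.comp c3)).add
    (continuous_const.mul ((Complex.continuous_normSq.comp c0).mul (cont_log hU1 hne)))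

lemma cont_eFt (hU : ContDiff ℝ 2 U) (hne : ∀ p, U p ≠ 0) : Continuous (eFt lam U) := by
  have hU1 : ContDiff ℝ 1 U := hU.of_le one_le_two
  have c0 : Continuous U := hU.continuous
  have c1 := Dv_continuous hU1 pe1
  have c2 := Dv_continuous hU1 pe2
  have c3 := Dv_continuous hU1 pe3
  have c12 := Dv2_continuous hU pe1 pe2
  have c13 := Dv2_continuous hU pe1 pe3
  refine ((continuous_const.mul (Complex.continuous_re.comp
      ((continuous_star.comp c2).mul c12))).add
    (continuous_const.mul (Complex.continuous_re.comp
      ((continuous_star.comp c3).mul c13)))).add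
    (continuous_const.mul (((cont_log hU1 hne).add continuous_const).mul
      (continuous_const.mul (Complex.continuous_re.comp
        ((continuous_star.comp c0).mul c1)))))

lemma cont_ePd (hU : ContDiff ℝ 2 U) : Continuous (ePd lam U) := by
  have hU1 : ContDiff ℝ 1 U := hU.of_le one_le_two
  have c0 : Continuous U := hU.continuous
  have c1 := Dv_continuous hU1 pe1
  have c2 := Dv_continuous hU1 pe2
  have c22 := Dv2_continuous hU pe2 pe2
  have c21 := Dv2_continuous hU pe2 pe1
  refine (continuous_const.mul ((Complex.continuous_re.comp
      ((continuous_star.comp c22).mul c1)).add (Complex.continuous_re.comp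
      ((continuous_star.comp c2).mul c21)))).add
    (continuous_const.mul ((Complex.continuous_re.comp
      ((continuous_const.mul (continuous_star.comp c2)).mul c2)).add
      (Complex.continuous_re.comp
      ((continuous_const.mul (continuous_star.comp c0)).mul c22))))

lemma cont_eQd (hU : ContDiff ℝ 2 U) : Continuous (eQd lam U) := by
  have hU1 : ContDiff ℝ 1 U := hU.of_le one_le_two
  have c0 : Continuous U := hU.continuous
  have c1 := Dv_continuous hU1 pe1
  have c3 := Dv_continuous hU1 pe3
  have c33 := Dv2_continuous hU pe3 pe3
  have c31 := Dv2_continuous hU pe3 pe1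
  refine (continuous_const.mul ((Complex.continuous_re.comp
      ((continuous_star.comp c33).mul c1)).add (Complex.continuous_re.comp
      ((continuous_star.comp c3).mul c31)))).add
    (continuous_const.mul ((Complex.continuous_re.comp
      ((continuous_const.mul (continuous_star.comp c3)).mul c3)).add
      (Complex.continuous_re.comp
      ((continuous_const.mul (continuous_star.comp c0)).mul c33))))

lemma eP_periodic (hU1 : ContDiff ℝ 1 U) (c : ℝ × ℝ × ℝ) (hper : ∀ p, U (p + c) = U p)
    (p : ℝ × ℝ × ℝ) : eP lam U (p + c) = eP lam U p := by
  unfold eP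
  rw [Dv_periodic hU1 c hper pe2 p, Dv_periodic hU1 c hper pe1 p, hper p]

lemma eQ_periodic (hU1 : ContDiff ℝ 1 U) (c : ℝ × ℝ × ℝ) (hper : ∀ p, U (p + c) = U p)
    (p : ℝ × ℝ × ℝ) : eQ lam U (p + c) = eQ lam U p := by
  unfold eQ
  rw [Dv_periodic hU1 c hper pe3 p, Dv_periodic hU1 c hper pe1 p, hper p]

end continuity

end LogSEAux

/-- Energy conservation for the logarithmic Schrödinger equation in 2D
    with periodic boundary conditions, for nowhere vanishing solutions. -/
theorem logse_energy_conservation_2d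
    (L₁ L₂ : ℝ) (hL₁ : 0 < L₁) (hL₂ : 0 < L₂) (lam : ℝ)
    (u : ℝ → ℝ → ℝ → ℂ)
    (hreg : ContDiff ℝ 2 (fun p : ℝ × ℝ × ℝ => u p.1 p.2.1 p.2.2))
    (hperx : ∀ t x y : ℝ, u t (x + L₁) y = u t x y)
    (hpery : ∀ t x y : ℝ, u t x (y + L₂) = u t x y)
    (hne : ∀ t x y : ℝ, u t x y ≠ 0)
    (hpde : ∀ t x y : ℝ,
      Complex.I * deriv (fun s => u s x y) t
        + deriv (deriv (fun x' => u t x' y)) x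
        + deriv (deriv (u t x)) y
        = (lam : ℂ) * u t x y * (Real.log ((‖u t x y‖) ^ 2) : ℂ)) :
    ∀ t₁ t₂ : ℝ,
      (∫ x in (0:ℝ)..L₁, ∫ y in (0:ℝ)..L₂,
          ((‖deriv (fun x' => u t₁ x' y) x‖) ^ 2
            + (‖deriv (u t₁ x) y‖) ^ 2
            + lam * (‖u t₁ x y‖) ^ 2
                * Real.log ((‖u t₁ x y‖) ^ 2)))
        = ∫ x in (0:ℝ)..L₁, ∫ y in (0:ℝ)..L₂,
            ((‖deriv (fun x' => u t₂ x' y) x‖) ^ 2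
              + (‖deriv (u t₂ x) y‖) ^ 2
              + lam * (‖u t₂ x y‖) ^ 2
                  * Real.log ((‖u t₂ x y‖) ^ 2)) := by
  intro t₁ t₂
  set U : ℝ × ℝ × ℝ → ℂ := fun p => u p.1 p.2.1 p.2.2 with hUdef
  have hU2 : ContDiff ℝ 2 U := hreg
  have hU1 : ContDiff ℝ 1 U := hU2.of_le one_le_two
  have hne' : ∀ p : ℝ × ℝ × ℝ, U p ≠ 0 := fun p => hne p.1 p.2.1 p.2.2
  -- slice derivative identifications
  have hdx : ∀ t x y : ℝ, deriv (fun x' => u t x' y) x = Dv pe2 U (t, x, y) :=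
    fun t x y => HasDerivAt.deriv
      (show HasDerivAt (fun x' => u t x' y) (Dv pe2 U (t, x, y)) x from
        hasDerivAt_slice2 hU1 t x y)
  have hdy : ∀ t x y : ℝ, deriv (u t x) y = Dv pe3 U (t, x, y) :=
    fun t x y => HasDerivAt.deriv
      (show HasDerivAt (u t x) (Dv pe3 U (t, x, y)) y from hasDerivAt_slice3 hU1 t x y)
  -- the PDE in terms of U
  have hPDE : ∀ p : ℝ × ℝ × ℝ,
      Complex.I * Dv pe1 U p + Dv pe2 (Dv pe2 U) p + Dv pe3 (Dv pe3 U) p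
        = (lam : ℂ) * U p * (Real.log (Complex.normSq (U p)) : ℂ) := by
    rintro ⟨t, x, y⟩
    have h := hpde t x y
    have e1 : deriv (fun s => u s x y) t = Dv pe1 U (t, x, y) := HasDerivAt.deriv
      (show HasDerivAt (fun s => u s x y) (Dv pe1 U (t, x, y)) t from
        hasDerivAt_slice1 hU1 t x y)
    have e2 : deriv (deriv (fun x' => u t x' y)) x = Dv pe2 (Dv pe2 U) (t, x, y) := by
      have hfun : deriv (fun x' => u t x' y) = fun x' => Dv pe2 U (t, x', y) :=
        funext fun x' => hdx t x' y
      rw [hfun]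
      exact (hasDerivAt_slice2 (Dv_contDiff_one hU2 pe2) t x y).deriv
    have e3 : deriv (deriv (u t x)) y = Dv pe3 (Dv pe3 U) (t, x, y) := by
      have hfun : deriv (u t x) = fun y' => Dv pe3 U (t, x, y') :=
        funext fun y' => hdy t x y'
      rw [hfun]
      exact (hasDerivAt_slice3 (Dv_contDiff_one hU2 pe3) t x y).deriv
    rw [e1, e2, e3, Complex.sq_norm] at h
    exact h
  -- periodicity of U
  have hperX : ∀ p : ℝ × ℝ × ℝ, U (p + ((0 : ℝ), L₁, (0 : ℝ))) = U p := by
    rintro ⟨t, x, y⟩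
    have hpt : ((t, x, y) : ℝ × ℝ × ℝ) + ((0 : ℝ), L₁, (0 : ℝ)) = (t, x + L₁, y) := by
      simp [Prod.ext_iff]
    rw [hpt]
    exact hperx t x y
  have hperY : ∀ p : ℝ × ℝ × ℝ, U (p + ((0 : ℝ), (0 : ℝ), L₂)) = U p := by
    rintro ⟨t, x, y⟩
    have hpt : ((t, x, y) : ℝ × ℝ × ℝ) + ((0 : ℝ), (0 : ℝ), L₂) = (t, x, y + L₂) := by
      simp [Prod.ext_iff]
    rw [hpt]
    exact hpery t x y
  -- divergence identity
  have hsymm2 : ∀ p, Dv pe1 (Dv pe2 U) p = Dv pe2 (Dv pe1 U) p := fun p => Dv_symm hU2 _ _ p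
  have hsymm3 : ∀ p, Dv pe1 (Dv pe3 U) p = Dv pe3 (Dv pe1 U) p := fun p => Dv_symm hU2 _ _ p
  have hid : ∀ p : ℝ × ℝ × ℝ, eFt lam U p = ePd lam U p + eQd lam U p := by
    intro p
    unfold eFt ePd eQd
    rw [hsymm2 p, hsymm3 p]
    exact logse_key_algebra lam (Real.log (Complex.normSq (U p))) (U p) (Dv pe1 U p)
      (Dv pe2 U p) (Dv pe3 U p) (Dv pe2 (Dv pe2 U) p) (Dv pe3 (Dv pe3 U) p)
      (Dv pe2 (Dv pe1 U) p) (Dv pe3 (Dv pe1 U) p) (hPDE p)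
  -- continuity facts
  have cF : Continuous (eF lam U) := cont_eF hU2 hne'
  have cFt : Continuous (eFt lam U) := cont_eFt hU2 hne'
  have cPd : Continuous (ePd lam U) := cont_ePd hU2
  have cQd : Continuous (eQd lam U) := cont_eQd hU2
  have ctriple : ∀ t x : ℝ, Continuous fun y : ℝ => ((t, x, y) : ℝ × ℝ × ℝ) := by
    intro t x; exact continuous_const.prodMk (continuous_const.prodMk continuous_id)
  have ctriple2 : ∀ t y : ℝ, Continuous fun x : ℝ => ((t, x, y) : ℝ × ℝ × ℝ) := by
    intro t y; exact continuous_const.prodMk (continuous_id.prodMk continuous_const)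
  have ctriple1 : ∀ x y : ℝ, Continuous fun t : ℝ => ((t, x, y) : ℝ × ℝ × ℝ) := by
    intro x y; exact continuous_id.prodMk (continuous_const.prodMk continuous_const)
  -- key: the space integral of eFt vanishes
  have hzero : ∀ s : ℝ,
      (∫ x in (0:ℝ)..L₁, ∫ y in (0:ℝ)..L₂, eFt lam U (s, x, y)) = 0 := by
    intro s
    have hQ : ∀ x : ℝ, (∫ y in (0:ℝ)..L₂, eQd lam U (s, x, y)) = 0 := by
      intro x
      rw [intervalIntegral.integral_eq_sub_of_hasDerivAt
        (f := fun y => eQ lam U (s, x, y)) (f' := fun y => eQd lam U (s, x, y))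
        (fun y _ => hasDerivAt_eQ_y hU2 s x y)
        ((cQd.comp (ctriple s x)).intervalIntegrable _ _)]
      have hpt : ((s, x, (0:ℝ)) : ℝ × ℝ × ℝ) + ((0 : ℝ), (0 : ℝ), L₂) = (s, x, L₂) := by
        simp [Prod.ext_iff]
      have := eQ_periodic (lam := lam) hU1 _ hperY (s, x, (0:ℝ))
      rw [hpt] at this
      rw [this, sub_self]
    have hP : ∀ y : ℝ, (∫ x in (0:ℝ)..L₁, ePd lam U (s, x, y)) = 0 := by
      intro y
      rw [intervalIntegral.integral_eq_sub_of_hasDerivAt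
        (f := fun x => eP lam U (s, x, y)) (f' := fun x => ePd lam U (s, x, y))
        (fun x _ => hasDerivAt_eP_x hU2 s x y)
        ((cPd.comp (ctriple2 s y)).intervalIntegrable _ _)]
      have hpt : ((s, (0:ℝ), y) : ℝ × ℝ × ℝ) + ((0 : ℝ), L₁, (0 : ℝ)) = (s, L₁, y) := by
        simp [Prod.ext_iff]
      have := eP_periodic (lam := lam) hU1 _ hperX (s, (0:ℝ), y)
      rw [hpt] at this
      rw [this, sub_self]
    calc (∫ x in (0:ℝ)..L₁, ∫ y in (0:ℝ)..L₂, eFt lam U (s, x, y))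
        = ∫ x in (0:ℝ)..L₁, ∫ y in (0:ℝ)..L₂, (ePd lam U (s, x, y) + eQd lam U (s, x, y)) := by
          apply intervalIntegral.integral_congr
          intro x _
          apply intervalIntegral.integral_congr
          intro y _
          exact hid (s, x, y)
      _ = ∫ x in (0:ℝ)..L₁, ∫ y in (0:ℝ)..L₂, ePd lam U (s, x, y) := by
          apply intervalIntegral.integral_congr
          intro x _
          simp only
          have h1 : Continuous fun y => ePd lam U (s, x, y) := cPd.comp (ctriple s x)
          have h2 : Continuous fun y => eQd lam U (s, x, y) := cQd.comp (ctriple s x)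
          rw [intervalIntegral.integral_add (h1.intervalIntegrable _ _)
            (h2.intervalIntegrable _ _), hQ x, add_zero]
      _ = ∫ y in (0:ℝ)..L₂, ∫ x in (0:ℝ)..L₁, ePd lam U (s, x, y) := by
          apply intervalIntegral_swap_continuous
          exact cPd.comp ((continuous_const.prodMk
            (continuous_fst.prodMk continuous_snd)))
      _ = ∫ y in (0:ℝ)..L₂, (0:ℝ) := by
          apply intervalIntegral.integral_congr
          intro y _
          exact hP y
      _ = 0 := by simp
  -- FTC in time
  have hFTC : ∀ x y : ℝ, eF lam U (t₂, x, y) - eF lam U (t₁, x, y)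
      = ∫ s in t₁..t₂, eFt lam U (s, x, y) := by
    intro x y
    exact (intervalIntegral.integral_eq_sub_of_hasDerivAt
      (fun s _ => hasDerivAt_eF_t hU2 hne' s x y)
      ((cFt.comp (ctriple1 x y)).intervalIntegrable _ _)).symm
  -- energy difference is zero
  have hEdiff : (∫ x in (0:ℝ)..L₁, ∫ y in (0:ℝ)..L₂, eF lam U (t₂, x, y))
      - (∫ x in (0:ℝ)..L₁, ∫ y in (0:ℝ)..L₂, eF lam U (t₁, x, y)) = 0 := by
    have cyF : ∀ t x : ℝ, IntervalIntegrable (fun y => eF lam U (t, x, y)) volume 0 L₂ :=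
      fun t x => (cF.comp (ctriple t x)).intervalIntegrable _ _
    have cxF : ∀ t : ℝ, Continuous fun x => ∫ y in (0:ℝ)..L₂, eF lam U (t, x, y) := by
      intro t
      apply continuous_parametric_intervalIntegral_of_continuous'
        (f := fun x y => eF lam U (t, x, y))
      exact cF.comp (continuous_const.prodMk (continuous_fst.prodMk continuous_snd))
    rw [← intervalIntegral.integral_sub ((cxF t₂).intervalIntegrable _ _)
      ((cxF t₁).intervalIntegrable _ _)]
    calc (∫ x in (0:ℝ)..L₁, ((∫ y in (0:ℝ)..L₂, eF lam U (t₂, x, y))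
            - ∫ y in (0:ℝ)..L₂, eF lam U (t₁, x, y)))
        = ∫ x in (0:ℝ)..L₁, ∫ y in (0:ℝ)..L₂,
            (eF lam U (t₂, x, y) - eF lam U (t₁, x, y)) := by
          apply intervalIntegral.integral_congr
          intro x _
          simp only
          rw [intervalIntegral.integral_sub (cyF t₂ x) (cyF t₁ x)]
      _ = ∫ x in (0:ℝ)..L₁, ∫ y in (0:ℝ)..L₂, ∫ s in t₁..t₂, eFt lam U (s, x, y) := by
          apply intervalIntegral.integral_congr
          intro x _
          apply intervalIntegral.integral_congr
          intro y _
          exact hFTC x y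
      _ = ∫ x in (0:ℝ)..L₁, ∫ s in t₁..t₂, ∫ y in (0:ℝ)..L₂, eFt lam U (s, x, y) := by
          apply intervalIntegral.integral_congr
          intro x _
          simp only
          apply intervalIntegral_swap_continuous (fun y s => eFt lam U (s, x, y))
          have : Continuous fun p : ℝ × ℝ => eFt lam U (p.2, x, p.1) :=
            cFt.comp (continuous_snd.prodMk (continuous_const.prodMk continuous_fst))
          exact this
      _ = ∫ s in t₁..t₂, ∫ x in (0:ℝ)..L₁, ∫ y in (0:ℝ)..L₂, eFt lam U (s, x, y) := by
          apply intervalIntegral_swap_continuous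
            (fun x s => ∫ y in (0:ℝ)..L₂, eFt lam U (s, x, y))
          apply continuous_parametric_intervalIntegral_of_continuous'
            (f := fun q : ℝ × ℝ => fun y => eFt lam U (q.2, q.1, y))
          have : Continuous fun z : (ℝ × ℝ) × ℝ => eFt lam U (z.1.2, z.1.1, z.2) :=
            cFt.comp ((continuous_snd.comp continuous_fst).prodMk
              ((continuous_fst.comp continuous_fst).prodMk continuous_snd))
          exact this
      _ = ∫ s in t₁..t₂, (0:ℝ) := by
          apply intervalIntegral.integral_congr
          intro s _
          exact hzero s
      _ = 0 := by simp
  -- translate the goal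
  have hinteg : ∀ t x y : ℝ,
      (‖deriv (fun x' => u t x' y) x‖) ^ 2
        + (‖deriv (u t x) y‖) ^ 2
        + lam * (‖u t x y‖) ^ 2 * Real.log ((‖u t x y‖) ^ 2)
      = eF lam U (t, x, y) := by
    intro t x y
    unfold eF
    rw [hdx t x y, hdy t x y, Complex.sq_norm, Complex.sq_norm, Complex.sq_norm]
    have : u t x y = U (t, x, y) := rfl
    rw [this]
    ring
  have hcong : ∀ t : ℝ,
      (∫ x in (0:ℝ)..L₁, ∫ y in (0:ℝ)..L₂,
          ((‖deriv (fun x' => u t x' y) x‖) ^ 2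
            + (‖deriv (u t x) y‖) ^ 2
            + lam * (‖u t x y‖) ^ 2
                * Real.log ((‖u t x y‖) ^ 2)))
        = ∫ x in (0:ℝ)..L₁, ∫ y in (0:ℝ)..L₂, eF lam U (t, x, y) := by
    intro t
    apply intervalIntegral.integral_congr
    intro x _
    apply intervalIntegral.integral_congr
    intro y _
    exact hinteg t x y
  rw [hcong t₁, hcong t₂]
  linarith [hEdiff]
end

section
/- Let F : ℝ × (ℝ × ℝ) → ℝ × ℝ be continuously differentiable, with F(0, (0,0)) = (0,0), and suppose the derivative of the map β ↦ F(0, β) at β = (0,0) is an invertible linear map of ℝ × ℝ. Let β : ℝ → ℝ × ℝ be continuous with β(0) = (0,0) and F(τ, β(τ)) = (0,0) for all τ in some interval [0, τ*], τ* > 0. Assume additionally that there exist C > 0, τ₁ > 0 and a natural number q ≥ 1 such that ‖F(τ, (0,0))‖ ≤ C·τ^q for all τ ∈ [0, τ₁]. Then there exist C' > 0 and τ₀ > 0 such that ‖β(τ)‖ ≤ C'·τ^q for all τ ∈ [0, τ₀]. -/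
/-- The supplementary variables inherit the consistency order of the scheme:
    if ‖F(τ, 0)‖ = O(τ^q), then the solution β(τ) of F(τ, β(τ)) = 0
    satisfies ‖β(τ)‖ = O(τ^q). -/
theorem svm_supplementary_variables_order
    (F : ℝ × (ℝ × ℝ) → ℝ × ℝ)
    (hF : ContDiff ℝ 1 F)
    (hF0 : F (0, (0, 0)) = (0, 0))
    (J : (ℝ × ℝ) ≃L[ℝ] (ℝ × ℝ))
    (hJ : HasFDerivAt (fun b : ℝ × ℝ => F (0, b))
            (J : (ℝ × ℝ) →L[ℝ] (ℝ × ℝ)) (0, 0))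
    (β : ℝ → ℝ × ℝ) (hβcont : Continuous β) (hβ0 : β 0 = (0, 0))
    (τstar : ℝ) (hτstar : 0 < τstar)
    (hβ : ∀ τ ∈ Set.Icc (0 : ℝ) τstar, F (τ, β τ) = (0, 0))
    (C τ₁ : ℝ) (hC : 0 < C) (hτ₁ : 0 < τ₁) (q : ℕ) (hq : 1 ≤ q)
    (hFbound : ∀ τ ∈ Set.Icc (0 : ℝ) τ₁, ‖F (τ, (0, 0))‖ ≤ C * τ ^ q) :
    ∃ C' : ℝ, 0 < C' ∧ ∃ τ₀ : ℝ, 0 < τ₀ ∧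
      ∀ τ ∈ Set.Icc (0 : ℝ) τ₀, ‖β τ‖ ≤ C' * τ ^ q := by
  have hFd : Differentiable ℝ F := hF.differentiable one_ne_zero
  -- partial derivative in β
  set A : ℝ × (ℝ × ℝ) → (ℝ × ℝ) →L[ℝ] (ℝ × ℝ) :=
    fun p => (fderiv ℝ F p).comp (ContinuousLinearMap.inr ℝ ℝ (ℝ × ℝ)) with hA
  have hpart : ∀ t : ℝ, ∀ b : ℝ × ℝ,
      HasFDerivAt (fun b : ℝ × ℝ => F (t, b)) (A (t, b)) b := by
    intro t b
    exact (hFd (t, b)).hasFDerivAt.comp b (hasFDerivAt_prodMk_right t b)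
  have hA00 : A (0, (0, 0)) = (J : (ℝ × ℝ) →L[ℝ] (ℝ × ℝ)) :=
    (hpart 0 (0, 0)).unique hJ
  -- the map Φ
  set Φ : ℝ × (ℝ × ℝ) → (ℝ × ℝ) →L[ℝ] (ℝ × ℝ) :=
    fun p => ((J.symm : (ℝ × ℝ) →L[ℝ] (ℝ × ℝ)).comp (A p)) -
      ContinuousLinearMap.id ℝ (ℝ × ℝ) with hΦdef
  have hΦcont : Continuous Φ := by
    apply Continuous.sub _ continuous_const
    exact continuous_const.clm_comp
      ((hF.continuous_fderiv one_ne_zero).clm_comp continuous_const)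
  have hΦ0 : Φ (0, (0, 0)) = 0 := by
    simp only [hΦdef, hA00]
    ext v <;> simp
  -- choose δ with ‖Φ p‖ ≤ 1/2 for ‖p‖ < δ
  obtain ⟨δ, hδpos, hδ⟩ := Metric.continuousAt_iff.mp hΦcont.continuousAt
    (1/2) (by norm_num)
  rw [hΦ0] at hδ
  -- choose δ' for continuity of β at 0
  obtain ⟨δ', hδ'pos, hδ'⟩ := Metric.continuousAt_iff.mp hβcont.continuousAt
    δ hδpos
  rw [hβ0] at hδ'
  set τ₀ : ℝ := min (min τstar τ₁) (min δ δ' / 2) with hτ₀def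
  have hτ₀pos : 0 < τ₀ := by positivity
  set M : ℝ := ‖(J.symm : (ℝ × ℝ) →L[ℝ] (ℝ × ℝ))‖ with hM
  refine ⟨2 * (M + 1) * C, by positivity, τ₀, hτ₀pos, ?_⟩
  intro τ hτ
  obtain ⟨hτ0, hττ₀⟩ := hτ
  have hτδ : τ < min δ δ' := lt_of_le_of_lt (hττ₀.trans (min_le_right _ _))
    (by linarith [lt_min hδpos hδ'pos])
  have hτs : τ ≤ τstar := hττ₀.trans ((min_le_left _ _).trans (min_le_left _ _))
  have hτ1 : τ ≤ τ₁ := hττ₀.trans ((min_le_left _ _).trans (min_le_right _ _))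
  have hβτ : ‖β τ‖ < δ := by
    have : dist τ 0 < δ' := by
      rw [Real.dist_eq, sub_zero, abs_of_nonneg hτ0]
      exact hτδ.trans_le (min_le_right _ _)
    simpa [dist_eq_norm, Prod.mk_zero_zero] using hδ' this
  -- mean value estimate on the ball of radius δ
  set s : Set (ℝ × ℝ) := Metric.ball (0 : ℝ × ℝ) δ with hs
  set g : (ℝ × ℝ) → (ℝ × ℝ) := fun b => J.symm (F (τ, b)) - b with hg
  have hgderiv : ∀ b ∈ s, HasFDerivWithinAt g (Φ (τ, b)) s b := by
    intro b _
    exact (((J.symm : (ℝ × ℝ) →L[ℝ] (ℝ × ℝ)).hasFDerivAt.comp b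
      (hpart τ b)).sub (hasFDerivAt_id b)).hasFDerivWithinAt
  have hgbound : ∀ b ∈ s, ‖Φ (τ, b)‖ ≤ 1/2 := by
    intro b hb
    have hdist : dist ((τ, b) : ℝ × (ℝ × ℝ)) (0, (0, 0)) < δ := by
      rw [Prod.dist_eq]
      refine max_lt ?_ ?_
      · rw [Real.dist_eq, sub_zero, abs_of_nonneg hτ0]
        exact hτδ.trans_le (min_le_left _ _)
      · simpa [hs, Metric.mem_ball, Prod.mk_zero_zero] using hb
    have := hδ (by simpa using hdist)
    rw [dist_eq_norm, sub_zero] at this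
    exact this.le
  have h0s : (0 : ℝ × ℝ) ∈ s := Metric.mem_ball_self hδpos
  have hβs : β τ ∈ s := by simpa [hs, Metric.mem_ball, dist_eq_norm] using hβτ
  have hmv : ‖g (β τ) - g 0‖ ≤ (1/2) * ‖β τ - 0‖ :=
    (convex_ball _ _).norm_image_sub_le_of_norm_hasFDerivWithin_le
      hgderiv hgbound h0s hβs
  have hFτ : F (τ, β τ) = 0 := by
    have := hβ τ ⟨hτ0, hτs⟩
    simpa [Prod.mk_zero_zero] using this
  have hgβ : g (β τ) = -β τ := by simp [hg, hFτ]
  have hg0 : g 0 = J.symm (F (τ, (0, 0))) := by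
    simp [hg, Prod.mk_zero_zero]
  have hnormJ : ‖J.symm (F (τ, (0, 0)))‖ ≤ M * (C * τ ^ q) := by
    calc ‖J.symm (F (τ, (0, 0)))‖
        ≤ M * ‖F (τ, (0, 0))‖ := (J.symm : (ℝ × ℝ) →L[ℝ] (ℝ × ℝ)).le_opNorm _
      _ ≤ M * (C * τ ^ q) := by
          apply mul_le_mul_of_nonneg_left (hFbound τ ⟨hτ0, hτ1⟩) (norm_nonneg _)
  have key : ‖β τ‖ ≤ (1/2) * ‖β τ‖ + M * (C * τ ^ q) := by
    have h1 : ‖β τ + J.symm (F (τ, (0, 0)))‖ ≤ (1/2) * ‖β τ‖ := by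
      have := hmv
      rw [hgβ, hg0, sub_zero] at this
      calc ‖β τ + J.symm (F (τ, (0, 0)))‖
          = ‖-β τ - J.symm (F (τ, (0, 0)))‖ := by rw [← norm_neg]; ring_nf
        _ ≤ (1/2) * ‖β τ‖ := this
    calc ‖β τ‖ = ‖(β τ + J.symm (F (τ, (0, 0)))) - J.symm (F (τ, (0, 0)))‖ := by
          ring_nf
      _ ≤ ‖β τ + J.symm (F (τ, (0, 0)))‖ + ‖J.symm (F (τ, (0, 0)))‖ :=
          norm_sub_le _ _
      _ ≤ (1/2) * ‖β τ‖ + M * (C * τ ^ q) := add_le_add h1 hnormJ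
  have hM0 : 0 ≤ M := norm_nonneg _
  have hτq : 0 ≤ τ ^ q := pow_nonneg hτ0 q
  nlinarith [hτq, hC.le]
end
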